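/- An integral domain D is a Prüfer v-multiplication domain if and only if D is essential and admits an essential representation {D_p : p ∈ Y} where Y ⊆ Spec(D) is compact (quasi-compact) in the Zariski topology. -/

import Mathlib

open scoped nonZeroDivisors

/-- The localization of `R` at the prime `p`, viewed inside a field `K` to which `R` maps. -/
def locg {R K : Type*} [CommRing R] [Field K] [Algebra R K] (p : PrimeSpectrum R) :
    Subring K where
  carrier := {x : K | ∃ a b : R, b ∉ p.asIdeal ∧ x * algebraMap R K b = algebraMap R K a}
  zero_mem' := ⟨0, 1, fun h => p.2.ne_top ((Ideal.eq_top_iff_one _).2 h), by simp⟩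
  one_mem' := ⟨1, 1, fun h => p.2.ne_top ((Ideal.eq_top_iff_one _).2 h), by simp⟩
  add_mem' := by
    rintro x y ⟨a₁, b₁, hb₁, e₁⟩ ⟨a₂, b₂, hb₂, e₂⟩
    exact ⟨a₁ * b₂ + a₂ * b₁, b₁ * b₂,
      fun h => ((p.2.mem_or_mem h).elim hb₁ hb₂), by
        rw [map_add, map_mul, map_mul, map_mul]
        linear_combination (algebraMap R K b₂) * e₁ + (algebraMap R K b₁) * e₂⟩
  mul_mem' := by
    rintro x y ⟨a₁, b₁, hb₁, e₁⟩ ⟨a₂, b₂, hb₂, e₂⟩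
    exact ⟨a₁ * a₂, b₁ * b₂,
      fun h => ((p.2.mem_or_mem h).elim hb₁ hb₂), by
        rw [map_mul, map_mul, show x * y * (algebraMap R K b₁ * algebraMap R K b₂)
          = (x * algebraMap R K b₁) * (y * algebraMap R K b₂) by ring, e₁, e₂]⟩
  neg_mem' := by
    rintro x ⟨a, b, hb, e⟩
    exact ⟨-a, b, hb, by rw [map_neg, neg_mul, e]⟩
/-- `I` is a `t`-ideal: its `t`-closure is contained in (hence equal to) `I`. -/
def IsTIdeal (R : Type*) [CommRing R] [IsDomain R] (I : Ideal R) : Prop :=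
  ∀ x : R, (∃ J : Ideal R, J.FG ∧ J ≤ I ∧
    algebraMap R (FractionRing R) x ∈
      (1 / (1 / (J : FractionalIdeal R⁰ (FractionRing R))))) → x ∈ I

/-- `M` is a `t`-maximal ideal: maximal among proper `t`-ideals. -/
def IsTMax (R : Type*) [CommRing R] [IsDomain R] (M : Ideal R) : Prop :=
  IsTIdeal R M ∧ M ≠ ⊤ ∧ ∀ I : Ideal R, IsTIdeal R I → I ≠ ⊤ → M ≤ I → I = M
/-- `R` is a Prüfer `v`-multiplication domain: the localization at every `t`-maximal
ideal is a valuation domain. -/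
def IsPvMD (R : Type*) [CommRing R] [IsDomain R] : Prop :=
  ∀ M : Ideal R, IsTMax R M → ∀ hM : M.IsPrime,
    ValuationRing (locg (K := FractionRing R) ⟨M, hM⟩)
/-- The essential prime spectrum: the primes at which the localization is a valuation
domain. -/
def EssSpec (R : Type*) [CommRing R] [IsDomain R] : Set (PrimeSpectrum R) :=
  {p : PrimeSpectrum R | ValuationRing (locg (K := FractionRing R) p)}

/-- `{D_p : p ∈ Y}` is an essential representation of `R`: each localization is a
valuation domain, and their intersection (inside the quotient field) is `R`. -/
def IsEssentialRep (R : Type*) [CommRing R] [IsDomain R] (Y : Set (PrimeSpectrum R)) : Prop :=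
  (∀ p ∈ Y, ValuationRing (locg (K := FractionRing R) p)) ∧
    (⨅ p ∈ Y, locg (K := FractionRing R) p) = (algebraMap R (FractionRing R)).range

/-- `R` is an essential domain. -/
def IsEssential (R : Type*) [CommRing R] [IsDomain R] : Prop :=
  ∃ Y : Set (PrimeSpectrum R), IsEssentialRep R Y

section PvMDAux

variable {R : Type*} [CommRing R] [IsDomain R]
local notation "φ" => algebraMap R (FractionRing R)
local notation "FI" => FractionalIdeal R⁰ (FractionRing R)

lemma mem_locg {p : PrimeSpectrum R} {x : FractionRing R} :
    x ∈ locg (K := FractionRing R) p ↔ ∃ a b : R, b ∉ p.asIdeal ∧ x * φ b = φ a := Iff.rfl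

lemma range_le_locg (p : PrimeSpectrum R) : (φ).range ≤ locg (K := FractionRing R) p := by
  rintro x ⟨r, rfl⟩
  exact ⟨r, 1, fun h => p.2.ne_top ((Ideal.eq_top_iff_one _).2 h), by simp⟩

open FractionalIdeal

lemma one_mem_one_div {J : Ideal R} (hJ : J ≠ ⊥) : (1 : FractionRing R) ∈ 1 / (J : FI) := by
  rw [mem_div_iff_of_ne_zero (by simpa using hJ)]
  intro y hy
  rw [one_mul]
  obtain ⟨z, _, rfl⟩ := (mem_coeIdeal _).mp hy
  exact coe_mem_one _ _

lemma one_div_coe_ne_zero {J : Ideal R} (hJ : J ≠ ⊥) : (1 / (J : FI)) ≠ 0 := fun h => by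
  have := one_mem_one_div (R := R) hJ
  rw [h] at this
  simp at this

/-- antitonicity of `1 / ·` on nonzero fractional ideals -/
lemma one_div_anti {I I' : FI} (hI : I ≠ 0) (h : I ≤ I') : 1 / I' ≤ 1 / I := by
  intro x hx
  have hI' : I' ≠ 0 := fun e => hI (le_antisymm (e ▸ h) (zero_le I))
  show x ∈ (1 / I : FI)
  have hx : x ∈ (1 / I' : FI) := hx
  rw [mem_div_iff_of_ne_zero hI]
  intro y hy
  exact (mem_div_iff_of_ne_zero hI').mp hx y (h hy)

lemma le_dd {I : FI} (hI : I ≠ 0) (h1 : 1 / I ≠ 0) : I ≤ 1 / (1 / I) := by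
  intro x hx
  show x ∈ (1 / (1 / I) : FI)
  have hx : x ∈ I := hx
  rw [mem_div_iff_of_ne_zero h1]
  intro y hy
  rw [mul_comm]
  exact (mem_div_iff_of_ne_zero hI).mp hy x hx

lemma ddd_eq_d {J : Ideal R} (hJ : J ≠ ⊥) :
    1 / (1 / (1 / (J : FI))) = 1 / (J : FI) := by
  have hI : (J : FI) ≠ 0 := by simpa using hJ
  have hd : 1 / (J : FI) ≠ 0 := one_div_coe_ne_zero hJ
  have hIdd : (J : FI) ≤ 1 / (1 / (J : FI)) := le_dd hI hd
  have hdd : 1 / (1 / (J : FI)) ≠ 0 := fun e => hI (le_antisymm (e ▸ hIdd) (zero_le _))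
  exact le_antisymm (one_div_anti hI hIdd) (le_dd hd hdd)

/-- monotonicity of the `v`-operation on integral ideals. -/
lemma v_mono {J J' : Ideal R} (h : J ≤ J') :
    1 / (1 / (J : FI)) ≤ 1 / (1 / (J' : FI)) := by
  by_cases hJ : J = ⊥
  · subst hJ
    rw [coeIdeal_bot, FractionalIdeal.div_zero, FractionalIdeal.div_zero]
    exact zero_le _
  · have hJ' : J' ≠ ⊥ := fun e => hJ (le_bot_iff.mp (e ▸ h))
    have hcc : (J : FI) ≤ (J' : FI) := by exact_mod_cast coeIdeal_le_coeIdeal _ |>.mpr h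
    have h1 : 1 / (J' : FI) ≤ 1 / (J : FI) := one_div_anti (by simpa using hJ) hcc
    exact one_div_anti (one_div_coe_ne_zero hJ') h1

/-- The `t`-closure of an ideal. -/
def tcl (I : Ideal R) : Ideal R where
  carrier := {x | ∃ J : Ideal R, J.FG ∧ J ≤ I ∧ φ x ∈ 1 / (1 / (J : FI))}
  zero_mem' := ⟨⊥, ⟨∅, by simp⟩, bot_le, by
    rw [_root_.map_zero]; exact Submodule.zero_mem _⟩
  add_mem' := by
    rintro x y ⟨J₁, hf₁, hle₁, hx⟩ ⟨J₂, hf₂, hle₂, hy⟩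
    refine ⟨J₁ ⊔ J₂, Submodule.FG.sup hf₁ hf₂, sup_le hle₁ hle₂, ?_⟩
    rw [_root_.map_add]
    exact Submodule.add_mem _ (v_mono le_sup_left hx) (v_mono le_sup_right hy)
  smul_mem' := by
    rintro c x ⟨J, hf, hle, hx⟩
    refine ⟨J, hf, hle, ?_⟩
    rw [smul_eq_mul, _root_.map_mul, ← Algebra.smul_def]
    exact Submodule.smul_mem _ _ hx

lemma le_tcl (I : Ideal R) : I ≤ tcl I := by
  intro x hx
  by_cases hx0 : x = 0
  · subst hx0; exact (tcl I).zero_mem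
  refine ⟨Ideal.span {x}, ⟨{x}, by simp⟩, by rwa [Ideal.span_le, Set.singleton_subset_iff], ?_⟩
  have hJ : Ideal.span {x} ≠ (⊥ : Ideal R) := by
    simpa [Ideal.span_eq_bot] using hx0
  refine le_dd (coeIdeal_ne_zero.mpr hJ) (one_div_coe_ne_zero hJ) ?_
  exact mem_coeIdeal_of_mem _ (Ideal.mem_span_singleton_self x)

lemma tcl_isTIdeal (I : Ideal R) : IsTIdeal R (tcl I) := by
  rintro x ⟨J', hf', hle', hx⟩
  by_cases hJ' : J' = ⊥
  · subst hJ'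
    rw [coeIdeal_bot, FractionalIdeal.div_zero, FractionalIdeal.div_zero] at hx
    have : x = 0 := by
      have := FractionalIdeal.mem_zero_iff R⁰ |>.mp hx
      exact (map_eq_zero_iff _ (IsFractionRing.injective R (FractionRing R))).mp this
    subst this; exact (tcl I).zero_mem
  -- choose generators
  obtain ⟨T, hT⟩ := hf'
  -- each generator lies in some J_v with J FG ≤ I; take the (finite) sum W
  have hgen : ∀ t ∈ (T : Set R), ∃ J : Ideal R, J.FG ∧ J ≤ I ∧ φ t ∈ 1 / (1 / (J : FI)) :=
    fun t ht => hle' (hT ▸ Ideal.subset_span ht)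
  choose Jt hJtfg hJtle hJtmem using hgen
  classical
  let W : Ideal R := T.attach.sup (fun t => Jt t.1 t.2)
  have hWfg : W.FG := Submodule.fg_finset_sup _ _ (fun t _ => hJtfg t.1 t.2)
  have hWle : W ≤ I := Finset.sup_le (fun t _ => hJtle t.1 t.2)
  have hWmem : ∀ t ∈ (T : Set R), φ t ∈ 1 / (1 / (W : FI)) := fun t ht =>
    v_mono (Finset.le_sup (f := fun s : {x // x ∈ T} => Jt s.1 s.2)
      (Finset.mem_attach _ ⟨t, ht⟩)) (hJtmem t ht)
  have hW : W ≠ ⊥ := by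
    intro hW0
    apply hJ'
    rw [← hT, Ideal.span_eq_bot]
    intro t ht
    have := hWmem t ht
    rw [hW0, coeIdeal_bot, FractionalIdeal.div_zero, FractionalIdeal.div_zero] at this
    have := FractionalIdeal.mem_zero_iff R⁰ |>.mp this
    exact (map_eq_zero_iff _ (IsFractionRing.injective R (FractionRing R))).mp this
  -- J' ≤ (W)_v as fractional ideals
  have hmap : Submodule.map (Algebra.linearMap R (FractionRing R)) (Ideal.span (T : Set R))
      ≤ ((1 / (1 / (W : FI)) : FI) : Submodule R (FractionRing R)) := by
    rw [Ideal.span, Submodule.map_span, Submodule.span_le]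
    rintro _ ⟨t, ht, rfl⟩
    exact hWmem t ht
  have hJ'le : (J' : FI) ≤ 1 / (1 / (W : FI)) := by
    intro z hz
    show z ∈ (1 / (1 / (W : FI)) : FI)
    have hz : z ∈ (J' : FI) := hz
    obtain ⟨w, hw, rfl⟩ := (mem_coeIdeal _).mp hz
    rw [← hT] at hw
    exact hmap (Submodule.mem_map_of_mem hw)
  -- hence (J')_v ≤ (W)_v
  have hvv : 1 / (1 / (J' : FI)) ≤ 1 / (1 / (W : FI)) := by
    have h1 : 1 / (1 / (1 / (W : FI))) ≤ 1 / (J' : FI) :=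
      one_div_anti (by simpa using hJ') hJ'le
    rw [ddd_eq_d hW] at h1
    exact one_div_anti (one_div_coe_ne_zero hW) h1
  exact ⟨W, hWfg, hWle, hvv hx⟩

lemma exists_tmax {I₀ : Ideal R} (ht : IsTIdeal R I₀) (hne : I₀ ≠ ⊤) :
    ∃ M : Ideal R, IsTMax R M ∧ I₀ ≤ M := by
  have hchainub : ∀ c ⊆ {I : Ideal R | IsTIdeal R I ∧ I ≠ ⊤}, IsChain (· ≤ ·) c →
      ∀ y ∈ c, ∃ ub ∈ {I : Ideal R | IsTIdeal R I ∧ I ≠ ⊤}, ∀ z ∈ c, z ≤ ub := by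
    intro c hcs hchain y hy
    refine ⟨sSup c, ⟨?_, ?_⟩, fun z hz => le_sSup hz⟩
    · -- sSup of a chain of t-ideals is a t-ideal
      rintro x ⟨J, hfg, hle, hx⟩
      obtain ⟨T, hT⟩ := hfg
      have hdir := hchain.directedOn
      -- find a member of the chain containing all of T
      have key : ∀ T' : Finset R, (↑T' : Set R) ⊆ (sSup c : Ideal R) →
          ∃ I ∈ c, (↑T' : Set R) ⊆ (I : Set R) := by
        classical
        intro T'
        induction T' using Finset.induction with
        | empty => exact fun _ => ⟨y, hy, by simp⟩
        | insert a T'' hnotmem ih =>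
          intro hsub
          obtain ⟨I₁, hI₁c, hI₁⟩ := ih (fun t ht => hsub (by simp [ht]))
          have ha : a ∈ sSup c := hsub (by simp)
          obtain ⟨I₂, hI₂c, hI₂⟩ :=
            (Submodule.mem_sSup_of_directed ⟨y, hy⟩ hdir).1 ha
          obtain ⟨I₃, hI₃c, h₁₃, h₂₃⟩ := hdir I₁ hI₁c I₂ hI₂c
          refine ⟨I₃, hI₃c, ?_⟩
          intro t htmem
          rcases Finset.mem_insert.mp htmem with rfl | htm
          · exact h₂₃ hI₂
          · exact h₁₃ (hI₁ htm)
      obtain ⟨I, hIc, hTI⟩ := key T (fun t ht' => hle (hT ▸ Ideal.subset_span ht'))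
      have hJI : J ≤ I := by rw [← hT, Ideal.span_le]; exact hTI
      exact le_sSup hIc ((hcs hIc).1 x ⟨J, ⟨T, hT⟩, hJI, hx⟩)
    · -- sSup of a chain of proper ideals is proper
      intro htop
      have : (1 : R) ∈ sSup c := htop ▸ Submodule.mem_top
      obtain ⟨I, hIc, hI⟩ := (Submodule.mem_sSup_of_directed ⟨y, hy⟩ hchain.directedOn).1 this
      exact (hcs hIc).2 ((Ideal.eq_top_iff_one I).mpr hI)
  obtain ⟨M, hxm, hMs, hmax⟩ := zorn_le_nonempty₀ {I : Ideal R | IsTIdeal R I ∧ I ≠ ⊤}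
    hchainub I₀ ⟨ht, hne⟩
  exact ⟨M, ⟨hMs.1, hMs.2, fun I hIt hIne hMI =>
    le_antisymm (hmax ⟨hIt, hIne⟩ hMI) hMI⟩, hxm⟩

lemma v_mul_singleton {J : Ideal R} (hJ : J ≠ ⊥) {a : R} (ha : a ≠ 0) {x : FractionRing R}
    (hx : x ∈ 1 / (1 / (J : FI))) :
    φ a * x ∈ 1 / (1 / ((Ideal.span {a} * J : Ideal R) : FI)) := by
  set N : Ideal R := Ideal.span {a} * J with hN
  have hNbot : N ≠ ⊥ := by
    rw [hN, Ne, Ideal.mul_eq_bot, not_or]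
    exact ⟨by simpa [Ideal.span_eq_bot] using ha, hJ⟩
  refine (mem_div_iff_of_ne_zero (one_div_coe_ne_zero hNbot)).mpr ?_
  intro z hz
  -- z ∈ 1/N implies z * φ a ∈ 1/J
  have hza : z * φ a ∈ (1 / (J : FI) : FI) := by
    rw [mem_div_iff_of_ne_zero (coeIdeal_ne_zero.mpr hJ)]
    intro w hw
    obtain ⟨j, hj, rfl⟩ := (mem_coeIdeal _).mp hw
    have : φ a * φ j ∈ (N : FI) := by
      rw [← _root_.map_mul]
      exact mem_coeIdeal_of_mem _
        (Ideal.mul_mem_mul (Ideal.mem_span_singleton_self a) hj)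
    have := (mem_div_iff_of_ne_zero (coeIdeal_ne_zero.mpr hNbot)).mp hz _ this
    convert this using 1
    ring
  have := (mem_div_iff_of_ne_zero (one_div_coe_ne_zero hJ)).mp hx _ hza
  convert this using 1
  ring

lemma tmax_isPrime {M : Ideal R} (hM : IsTMax R M) : M.IsPrime := by
  refine ⟨hM.2.1, ?_⟩
  intro a b hab
  by_contra hcon
  push_neg at hcon
  obtain ⟨haM, hbM⟩ := hcon
  have ha0 : a ≠ 0 := fun h => haM (h ▸ M.zero_mem)
  -- the ideal (M : a)
  let I : Ideal R := {
    carrier := {r | a * r ∈ M}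
    zero_mem' := by simp
    add_mem' := fun hx hy => by
      simp only [Set.mem_setOf_eq] at *
      rw [mul_add]; exact M.add_mem hx hy
    smul_mem' := fun c x hx => by
      simp only [Set.mem_setOf_eq, smul_eq_mul] at *
      rw [mul_left_comm]; exact M.mul_mem_left c hx }
  have hbI : b ∈ I := by simpa [I] using hab
  have hMI : M ≤ I := fun m hm => M.mul_mem_left a hm
  have hInetop : I ≠ ⊤ := by
    intro h
    have : a * 1 ∈ M := (Ideal.eq_top_iff_one I).mp h
    rw [mul_one] at this
    exact haM this
  have hIt : IsTIdeal R I := by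
    rintro x ⟨J, hfg, hle, hx⟩
    by_cases hJ : J = ⊥
    · subst hJ
      rw [coeIdeal_bot, FractionalIdeal.div_zero, FractionalIdeal.div_zero] at hx
      have := FractionalIdeal.mem_zero_iff R⁰ |>.mp hx
      have : x = 0 := (map_eq_zero_iff _ (IsFractionRing.injective R (FractionRing R))).mp this
      subst this; exact I.zero_mem
    have hax : φ (a * x) ∈ 1 / (1 / ((Ideal.span {a} * J : Ideal R) : FI)) := by
      rw [_root_.map_mul]
      exact v_mul_singleton hJ ha0 hx
    have hNle : Ideal.span {a} * J ≤ M := by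
      rw [Ideal.mul_le]
      intro r hr s hs
      obtain ⟨c, rfl⟩ := Ideal.mem_span_singleton'.mp hr
      have : a * s ∈ M := hle hs
      have : c * (a * s) ∈ M := M.mul_mem_left c this
      convert this using 1; ring
    have hNfg : (Ideal.span {a} * J).FG :=
      Submodule.FG.mul ⟨{a}, by simp⟩ hfg
    exact hM.1 (a * x) ⟨_, hNfg, hNle, hax⟩
  have heq := hM.2.2 I hIt hInetop hMI
  exact hbM (heq ▸ hbI)

lemma inter_tmax :
    (⨅ p ∈ {q : PrimeSpectrum R | IsTMax R q.asIdeal}, locg (K := FractionRing R) p)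
      = (φ).range := by
  refine le_antisymm ?_ (le_iInf fun p => le_iInf fun _ => range_le_locg p)
  intro u hu
  have hu' : ∀ p : PrimeSpectrum R, IsTMax R p.asIdeal →
      u ∈ locg (K := FractionRing R) p := by
    intro p hp
    have := Subring.mem_iInf.mp hu p
    exact Subring.mem_iInf.mp this hp
  -- the ideal of "denominators" of u
  let Iu : Ideal R := {
    carrier := {r | ∃ c, u * φ r = φ c}
    zero_mem' := ⟨0, by simp⟩
    add_mem' := by
      rintro x y ⟨c₁, h₁⟩ ⟨c₂, h₂⟩
      exact ⟨c₁ + c₂, by rw [_root_.map_add, _root_.map_add, mul_add, h₁, h₂]⟩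
    smul_mem' := by
      rintro c x ⟨d, hd⟩
      exact ⟨c * d, by
        rw [smul_eq_mul, _root_.map_mul, _root_.map_mul, mul_left_comm, hd]⟩ }
  have hIu : IsTIdeal R Iu := by
    rintro x ⟨J, hfg, hle, hx⟩
    by_cases hJ : J = ⊥
    · subst hJ
      rw [coeIdeal_bot, FractionalIdeal.div_zero, FractionalIdeal.div_zero] at hx
      have := FractionalIdeal.mem_zero_iff R⁰ |>.mp hx
      have : x = 0 := (map_eq_zero_iff _ (IsFractionRing.injective R (FractionRing R))).mp this
      subst this; exact Iu.zero_mem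
    have huJ : u ∈ (1 / (J : FI) : FI) := by
      rw [mem_div_iff_of_ne_zero (coeIdeal_ne_zero.mpr hJ)]
      intro y hy
      obtain ⟨j, hj, rfl⟩ := (mem_coeIdeal _).mp hy
      obtain ⟨c, hc⟩ := hle hj
      rw [hc]
      exact coe_mem_one _ _
    have := (mem_div_iff_of_ne_zero (one_div_coe_ne_zero hJ)).mp hx _ huJ
    rw [FractionalIdeal.mem_one_iff] at this
    obtain ⟨c, hc⟩ := this
    exact ⟨c, by rw [mul_comm]; exact hc.symm⟩
  by_cases htop : Iu = ⊤
  · obtain ⟨c, hc⟩ : ∃ c, u * φ 1 = φ c := (Ideal.eq_top_iff_one Iu).mp htop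
    rw [_root_.map_one, mul_one] at hc
    exact ⟨c, hc.symm⟩
  obtain ⟨M, hMmax, hIuM⟩ := exists_tmax hIu htop
  obtain ⟨a, b, hb, he⟩ := hu' ⟨M, tmax_isPrime hMmax⟩ hMmax
  exact absurd (hIuM ⟨a, he⟩) hb

lemma tmax_compact : IsCompact {q : PrimeSpectrum R | IsTMax R q.asIdeal} := by
  classical
  refine isCompact_of_finite_subcover fun {ι} U hUo hcov => ?_
  set S : Set R := {f | ∃ i, ↑(PrimeSpectrum.basicOpen f) ⊆ U i} with hSdef
  have hYS : ∀ p : PrimeSpectrum R, IsTMax R p.asIdeal → ∃ f ∈ S, f ∉ p.asIdeal := by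
    intro p hp
    obtain ⟨i, hpi⟩ := Set.mem_iUnion.mp (hcov hp)
    obtain ⟨v, ⟨f, rfl⟩, hpv, hvU⟩ :=
      PrimeSpectrum.isTopologicalBasis_basic_opens.exists_subset_of_mem_open hpi (hUo i)
    exact ⟨f, ⟨i, hvU⟩, hpv⟩
  have h1 : (1 : R) ∈ tcl (Ideal.span S) := by
    by_contra h1n
    have hne : tcl (Ideal.span S) ≠ ⊤ := fun h => h1n (by rw [h]; trivial)
    obtain ⟨M, hMmax, hle⟩ := exists_tmax (tcl_isTIdeal _) hne
    obtain ⟨f, hfS, hfM⟩ := hYS ⟨M, tmax_isPrime hMmax⟩ hMmax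
    exact hfM (hle (le_tcl _ (Ideal.subset_span hfS)))
  obtain ⟨J, hfg, hleS, h1v⟩ := h1
  obtain ⟨T, hT⟩ := hfg
  have hfin : ∀ t ∈ (T : Set R), ∃ T' : Finset R, ↑T' ⊆ S ∧ t ∈ Ideal.span (T' : Set R) :=
    fun t ht => Submodule.mem_span_finite_of_mem_span (hleS (hT ▸ Ideal.subset_span ht))
  choose T' hT'S hT't using hfin
  let S₀ : Finset R := T.attach.biUnion fun t => T' t.1 t.2
  have hS₀S : ∀ f ∈ S₀, ∃ i, ↑(PrimeSpectrum.basicOpen f) ⊆ U i := by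
    intro f hf
    obtain ⟨t, _, hft⟩ := Finset.mem_biUnion.mp hf
    exact hT'S t.1 t.2 hft
  have hJS₀ : J ≤ Ideal.span (S₀ : Set R) := by
    rw [← hT, Ideal.span_le]
    intro t ht
    have hsub : (↑(T' t ht) : Set R) ⊆ (↑S₀ : Set R) := by
      intro f hf
      exact Finset.mem_biUnion.mpr ⟨⟨t, ht⟩, Finset.mem_attach _ _, hf⟩
    exact Ideal.span_mono hsub (hT't t ht)
  refine ⟨S₀.attach.image (fun f => (hS₀S f.1 f.2).choose), ?_⟩
  intro p hp
  have hJp : ¬ J ≤ p.asIdeal := by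
    intro hJle
    have : (1 : R) ∈ p.asIdeal := hp.1 1 ⟨J, ⟨T, hT⟩, hJle, h1v⟩
    exact hp.2.1 ((Ideal.eq_top_iff_one _).mpr this)
  have hnsub : ¬ (↑S₀ : Set R) ⊆ ↑p.asIdeal :=
    fun hsub => hJp (le_trans hJS₀ (Ideal.span_le.mpr hsub))
  obtain ⟨f, hfS₀, hfp⟩ := Set.not_subset.mp hnsub
  refine Set.mem_iUnion₂.mpr ⟨(hS₀S f hfS₀).choose,
    Finset.mem_image.mpr ⟨⟨f, hfS₀⟩, Finset.mem_attach _ _, rfl⟩,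
    (hS₀S f hfS₀).choose_spec hfp⟩

lemma backward {Y : Set (PrimeSpectrum R)} (hrep : IsEssentialRep R Y) (hcomp : IsCompact Y) :
    IsPvMD R := by
  classical
  intro M hMmax hMp
  set p : PrimeSpectrum R := ⟨M, hMp⟩ with hpdef
  refine @ValuationRing.mk _ _ _ ⟨fun x y => ?_⟩
  by_cases hx0 : x = 0
  · exact ⟨0, Or.inr (by rw [mul_zero]; exact hx0.symm)⟩
  by_cases hy0 : y = 0
  · exact ⟨0, Or.inl (by rw [mul_zero]; exact hy0.symm)⟩
  rcases Set.eq_empty_or_nonempty Y with hYe | ⟨p₀, hp₀⟩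
  · -- Y empty: R is a field, everything trivial
    have htop : (⊤ : Subring (FractionRing R)) = (φ).range := by
      rw [← hrep.2, hYe]
      simp
    have hmem : (x.1⁻¹ * y.1) ∈ (φ).range := htop ▸ Subring.mem_top _
    obtain ⟨r, hr⟩ := hmem
    refine ⟨⟨x.1⁻¹ * y.1, hr ▸ range_le_locg p ⟨r, rfl⟩⟩, Or.inl (Subtype.ext ?_)⟩
    show x.1 * (x.1⁻¹ * y.1) = y.1
    have hxne : x.1 ≠ 0 := fun h => hx0 (Subtype.ext h)
    rw [← mul_assoc, mul_inv_cancel₀ hxne, one_mul]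
  obtain ⟨a, s, hs, hxs⟩ := x.2
  obtain ⟨b, t, ht, hyt⟩ := y.2
  have hinj : Function.Injective φ := IsFractionRing.injective R (FractionRing R)
  have hs0 : s ≠ 0 := fun h => hs (h ▸ M.zero_mem)
  have ht0 : t ≠ 0 := fun h => ht (h ▸ M.zero_mem)
  have hφs : φ s ≠ 0 := fun h => hs0 (hinj (by rwa [_root_.map_zero]))
  have hφt : φ t ≠ 0 := fun h => ht0 (hinj (by rwa [_root_.map_zero]))
  have ha0 : a ≠ 0 := by
    intro h
    apply hx0
    apply Subtype.ext
    have : x.1 * φ s = 0 := by rw [hxs, h, _root_.map_zero]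
    exact (mul_eq_zero.mp this).resolve_right hφs
  have hb0 : b ≠ 0 := by
    intro h
    apply hy0
    apply Subtype.ext
    have : y.1 * φ t = 0 := by rw [hyt, h, _root_.map_zero]
    exact (mul_eq_zero.mp this).resolve_right hφt
  -- the two "conductor"-style ideals
  let Ia : Ideal R := {
    carrier := {r | ∃ v, r * (b * s) = v * (a * t)}
    zero_mem' := ⟨0, by ring⟩
    add_mem' := by
      rintro r₁ r₂ ⟨v₁, h₁⟩ ⟨v₂, h₂⟩
      exact ⟨v₁ + v₂, by rw [add_mul, h₁, h₂, add_mul]⟩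
    smul_mem' := by
      rintro c r ⟨v, hv⟩
      exact ⟨c * v, by rw [smul_eq_mul, mul_assoc, hv, mul_assoc]⟩ }
  let Ib : Ideal R := {
    carrier := {r | ∃ v, r * (a * t) = v * (b * s)}
    zero_mem' := ⟨0, by ring⟩
    add_mem' := by
      rintro r₁ r₂ ⟨v₁, h₁⟩ ⟨v₂, h₂⟩
      exact ⟨v₁ + v₂, by rw [add_mul, h₁, h₂, add_mul]⟩
    smul_mem' := by
      rintro c r ⟨v, hv⟩
      exact ⟨c * v, by rw [smul_eq_mul, mul_assoc, hv, mul_assoc]⟩ }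
  have key : ∃ u v : R, u ∉ M ∧ (u * (a * t) = v * (b * s) ∨ u * (b * s) = v * (a * t)) := by
    by_cases hIa : Ia ≤ M
    · by_cases hIb : Ib ≤ M
      · -- both conductors inside M : contradiction with compactness
        exfalso
        -- the cover of Y
        set U : {f : R // f ∈ Ia ∨ f ∈ Ib} → Set (PrimeSpectrum R) :=
          fun i => ↑(PrimeSpectrum.basicOpen i.1) with hU
        have hcov : Y ⊆ ⋃ i, U i := by
          intro q hq
          have hval := hrep.1 q hq
          set xa : locg (K := FractionRing R) q := ⟨φ (a * t), range_le_locg q ⟨a * t, rfl⟩⟩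
          set xb : locg (K := FractionRing R) q := ⟨φ (b * s), range_le_locg q ⟨b * s, rfl⟩⟩
          obtain ⟨c, hc⟩ := (haveI := hval; ValuationRing.cond xa xb)
          obtain ⟨v, w, hw, hcw⟩ := c.2
          rcases hc with h | h
          · -- φ (a * t) * c = φ (b * s), so w ∈ Ib ... check
            have h' : φ (a * t) * c.1 = φ (b * s) := congrArg Subtype.val h
            have hmid : φ w * φ (b * s) = φ v * φ (a * t) := by
              rw [← h', ← hcw]; ring
            have hmem : w ∈ Ia := ⟨v, hinj ((_root_.map_mul φ w (b * s)).trans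
              (hmid.trans (_root_.map_mul φ v (a * t)).symm))⟩
            exact Set.mem_iUnion.mpr ⟨⟨w, Or.inl hmem⟩, hw⟩
          · have h' : φ (b * s) * c.1 = φ (a * t) := congrArg Subtype.val h
            have hmid : φ w * φ (a * t) = φ v * φ (b * s) := by
              rw [← h', ← hcw]; ring
            have hmem : w ∈ Ib := ⟨v, hinj ((_root_.map_mul φ w (a * t)).trans
              (hmid.trans (_root_.map_mul φ v (b * s)).symm))⟩
            exact Set.mem_iUnion.mpr ⟨⟨w, Or.inr hmem⟩, hw⟩
        obtain ⟨t0, hcov'⟩ := hcomp.elim_finite_subcover U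
          (fun i => (PrimeSpectrum.basicOpen i.1).2) hcov
        set G : Finset R := t0.image Subtype.val with hG
        set F : Ideal R := Ideal.span (G : Set R) with hF
        have hFfg : F.FG := ⟨G, rfl⟩
        have hFM : F ≤ M := by
          rw [hF, Ideal.span_le]
          intro f hf
          obtain ⟨i, _, rfl⟩ := Finset.mem_image.mp hf
          rcases i.2 with h | h
          · exact hIa h
          · exact hIb h
        have hwit : ∀ q ∈ Y, ∃ f ∈ G, f ∉ q.asIdeal := by
          intro q hq
          obtain ⟨i, hit, hqi⟩ := Set.mem_iUnion₂.mp (hcov' hq)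
          exact ⟨i.1, Finset.mem_image.mpr ⟨i, hit, rfl⟩, hqi⟩
        have hF0 : F ≠ ⊥ := by
          obtain ⟨f, hfG, hfq⟩ := hwit p₀ hp₀
          intro hFb
          have hf0 : f ≠ 0 := fun h => hfq (h ▸ p₀.asIdeal.zero_mem)
          have : f ∈ F := Ideal.subset_span hfG
          rw [hFb] at this
          exact hf0 (Ideal.mem_bot.mp this)
        have h1F : φ 1 ∈ 1 / (1 / (F : FI)) := by
          refine (mem_div_iff_of_ne_zero (one_div_coe_ne_zero hF0)).mpr ?_
          intro z hz
          have hzrange : z ∈ (φ).range := by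
            rw [← hrep.2]
            refine Subring.mem_iInf.mpr fun q => Subring.mem_iInf.mpr fun hq => ?_
            obtain ⟨f, hfG, hfq⟩ := hwit q hq
            have hfF : φ f ∈ (F : FI) := mem_coeIdeal_of_mem _ (Ideal.subset_span hfG)
            have : z * φ f ∈ (1 : FI) :=
              (mem_div_iff_of_ne_zero (coeIdeal_ne_zero.mpr hF0)).mp hz _ hfF
            obtain ⟨cz, hcz⟩ := FractionalIdeal.mem_one_iff _ |>.mp this
            exact ⟨cz, f, hfq, hcz.symm⟩
          obtain ⟨r, hr⟩ := hzrange
          rw [_root_.map_one, one_mul, ← hr]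
          exact coe_mem_one _ _
        have : (1 : R) ∈ M := hMmax.1 1 ⟨F, hFfg, hFM, h1F⟩
        exact hMmax.2.1 ((Ideal.eq_top_iff_one M).mpr this)
      · obtain ⟨u, hu, huM⟩ := SetLike.not_le_iff_exists.mp hIb
        obtain ⟨v, hv⟩ := hu
        exact ⟨u, v, huM, Or.inl hv⟩
    · obtain ⟨u, hu, huM⟩ := SetLike.not_le_iff_exists.mp hIa
      obtain ⟨v, hv⟩ := hu
      exact ⟨u, v, huM, Or.inr hv⟩
  obtain ⟨u, v, huM, hdisj⟩ := key
  have hu0 : u ≠ 0 := fun h => huM (h ▸ M.zero_mem)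
  have hφu : φ u ≠ 0 := fun h => hu0 (hinj (by rwa [_root_.map_zero]))
  have hcmem : (φ v * (φ u)⁻¹ : FractionRing R) ∈ locg (K := FractionRing R) p :=
    ⟨v, u, huM, by rw [mul_assoc, inv_mul_cancel₀ hφu, mul_one]⟩
  set c : locg (K := FractionRing R) p := ⟨φ v * (φ u)⁻¹, hcmem⟩ with hcdef
  have hcu : c.1 * φ u = φ v := by
    show φ v * (φ u)⁻¹ * φ u = φ v
    rw [mul_assoc, inv_mul_cancel₀ hφu, mul_one]
  have hφtus : φ t * φ u * φ s ≠ 0 := by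
    simp [hφt, hφu, hφs]
  rcases hdisj with huv | huv
  · -- u * (a * t) = v * (b * s) : y * c = x
    refine ⟨c, Or.inr (Subtype.ext ?_)⟩
    show y.1 * c.1 = x.1
    apply mul_right_cancel₀ hφtus
    have h1 : y.1 * c.1 * (φ t * φ u * φ s) = φ b * φ v * φ s := by
      calc y.1 * c.1 * (φ t * φ u * φ s) = (y.1 * φ t) * (c.1 * φ u) * φ s := by ring
        _ = φ b * φ v * φ s := by rw [hyt, hcu]
    have h2 : x.1 * (φ t * φ u * φ s) = φ a * φ t * φ u := by
      calc x.1 * (φ t * φ u * φ s) = (x.1 * φ s) * φ t * φ u := by ring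
        _ = φ a * φ t * φ u := by rw [hxs]
    have h3 : φ b * φ v * φ s = φ a * φ t * φ u := by
      rw [← _root_.map_mul, ← _root_.map_mul, ← _root_.map_mul, ← _root_.map_mul]
      exact congrArg φ (by linear_combination -huv)
    rw [h1, h2, h3]
  · -- u * (b * s) = v * (a * t) : x * c = y
    refine ⟨c, Or.inl (Subtype.ext ?_)⟩
    show x.1 * c.1 = y.1
    apply mul_right_cancel₀ hφtus
    have h1 : x.1 * c.1 * (φ t * φ u * φ s) = φ a * φ v * φ t := by
      calc x.1 * c.1 * (φ t * φ u * φ s) = (x.1 * φ s) * (c.1 * φ u) * φ t := by ring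
        _ = φ a * φ v * φ t := by rw [hxs, hcu]
    have h2 : y.1 * (φ t * φ u * φ s) = φ b * φ u * φ s := by
      calc y.1 * (φ t * φ u * φ s) = (y.1 * φ t) * φ u * φ s := by ring
        _ = φ b * φ u * φ s := by rw [hyt]
    have h3 : φ a * φ v * φ t = φ b * φ u * φ s := by
      rw [← _root_.map_mul, ← _root_.map_mul, ← _root_.map_mul, ← _root_.map_mul]
      exact congrArg φ (by linear_combination -huv)
    rw [h1, h2, h3]


end PvMDAux

theorem isPvMD_iff_essentialRep_compact {R : Type*} [CommRing R] [IsDomain R] :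
    IsPvMD R ↔
      IsEssential R ∧ ∃ Y : Set (PrimeSpectrum R), IsEssentialRep R Y ∧ IsCompact Y := by
  constructor
  · intro hPv
    have hrep : IsEssentialRep R {q : PrimeSpectrum R | IsTMax R q.asIdeal} := by
      constructor
      · intro p hp
        exact hPv p.asIdeal hp p.2
      · exact inter_tmax
    exact ⟨⟨_, hrep⟩, _, hrep, tmax_compact⟩
  · rintro ⟨_, Y, hrep, hcomp⟩
    exact backward hrep hcomp
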